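/- For each integer k ≥ 2 there exists exactly one critical value τ_c = τ_c(k) with 2 < τ_c < τ_0 := (2k+1)/(k−1) such that, for the equation 2x^{k+1} − τ·x^k + (τ−1)·x − 1 = 0 in the unknown x > 0 (with parameter τ > 2): (i) if τ < τ_c the equation has a unique positive solution; (ii) if τ = τ_c it has exactly two positive solutions; (iii) if τ > τ_c and τ ≠ τ_0 it has exactly three positive solutions; (iv) if τ = τ_0 it has exactly two positive solutions. In each case x = 1 is one of the solutions. -/

import Mathlib

namespace SOS3

noncomputable def Dp (k : ℕ) (x : ℝ) : ℝ := ∑ j ∈ Finset.Icc 1 (k-1), x ^ j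
noncomputable def Ep (k : ℕ) (x : ℝ) : ℝ := ∑ j ∈ Finset.Icc 1 (k-1), (j:ℝ) * x ^ (j-1)
noncomputable def qf (k : ℕ) (c x : ℝ) : ℝ := 2*x^k + 1 - c * Dp k x

lemma icc_nonempty {k : ℕ} (hk : 2 ≤ k) : (Finset.Icc 1 (k-1)).Nonempty := by
  refine ⟨1, ?_⟩
  simp [Finset.mem_Icc]
  omega

lemma Dp_pos {k : ℕ} (hk : 2 ≤ k) {x : ℝ} (hx : 0 < x) : 0 < Dp k x := by
  refine Finset.sum_pos (fun j hj => pow_pos hx j) (icc_nonempty hk)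

lemma Ep_pos {k : ℕ} (hk : 2 ≤ k) {x : ℝ} (hx : 0 < x) : 0 < Ep k x := by
  refine Finset.sum_pos (fun j hj => ?_) (icc_nonempty hk)
  have hj1 : 1 ≤ j := (Finset.mem_Icc.mp hj).1
  have : (0:ℝ) < j := by exact_mod_cast hj1
  positivity

lemma Dp_cont (k : ℕ) : Continuous (Dp k) := by
  unfold Dp
  exact continuous_finset_sum _ (fun j _ => continuous_pow j)

lemma qf_cont (k : ℕ) (c : ℝ) : Continuous (qf k c) := by
  unfold qf
  exact ((continuous_const.mul (continuous_pow k)).add continuous_const).sub (continuous_const.mul (Dp_cont k))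

lemma Dp_zero {k : ℕ} (hk : 2 ≤ k) : Dp k 0 = 0 := by
  unfold Dp
  refine Finset.sum_eq_zero (fun j hj => ?_)
  have hj1 : 1 ≤ j := (Finset.mem_Icc.mp hj).1
  exact zero_pow (by omega)

lemma qf_zero {k : ℕ} (hk : 2 ≤ k) (c : ℝ) : qf k c 0 = 1 := by
  unfold qf
  rw [Dp_zero hk, zero_pow (by omega : k ≠ 0)]
  ring

lemma Dp_one {k : ℕ} (hk : 2 ≤ k) : Dp k 1 = (k:ℝ) - 1 := by
  unfold Dp
  simp [Finset.sum_const, Nat.card_Icc]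
  have h1 : (1:ℕ) ≤ k - 1 := by omega
  rw [Nat.cast_sub (by omega : 1 ≤ k)]
  norm_num

end SOS3

namespace SOS3

lemma range_eq {k : ℕ} (hk : 2 ≤ k) : Finset.range k = insert 0 (Finset.Icc 1 (k-1)) := by
  ext j; simp [Finset.mem_Icc, Finset.mem_range]; omega

lemma Dp_mul {k : ℕ} (hk : 2 ≤ k) (x : ℝ) : (x - 1) * Dp k x = x ^ k - x := by
  have h0 : (0:ℕ) ∉ Finset.Icc 1 (k-1) := by simp
  have hgs := geom_sum_mul x k
  rw [range_eq hk, Finset.sum_insert h0] at hgs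
  rw [show (∑ j ∈ Finset.Icc 1 (k-1), x ^ j) = Dp k x from rfl] at hgs
  linear_combination hgs

lemma factor {k : ℕ} (hk : 2 ≤ k) (c x : ℝ) :
    2 * x ^ (k + 1) - (c + 2) * x ^ k + ((c + 2) - 1) * x - 1 = (x - 1) * qf k c x := by
  have h := Dp_mul hk x
  unfold qf
  linear_combination c * h

lemma qf_one {k : ℕ} (hk : 2 ≤ k) (c : ℝ) : qf k c 1 = 3 - c * ((k:ℝ) - 1) := by
  unfold qf; rw [Dp_one hk]; ring

lemma Ep_one {k : ℕ} (hk : 2 ≤ k) : 2 * Ep k 1 = (k:ℝ) * ((k:ℝ) - 1) := by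
  have h0 : (0:ℕ) ∉ Finset.Icc 1 (k-1) := by simp
  have : Ep k 1 = ((∑ j ∈ Finset.range k, j : ℕ) : ℝ) := by
    rw [range_eq hk, Finset.sum_insert h0]
    push_cast
    simp [Ep]
  rw [this]
  have h2 := Finset.sum_range_id_mul_two k
  have : ((∑ j ∈ Finset.range k, j : ℕ) : ℝ) * 2 = (k:ℝ) * ((k:ℝ) - 1) := by
    rw [← Nat.cast_ofNat, ← Nat.cast_mul, h2]
    push_cast [Nat.cast_sub (by omega : 1 ≤ k)]
    ring
  linarith [this]

lemma Ep_cont (k : ℕ) : Continuous (Ep k) := by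
  unfold Ep
  exact continuous_finset_sum _ (fun j _ => continuous_const.mul (continuous_pow _))

lemma Dp_hasDeriv (k : ℕ) (x : ℝ) : HasDerivAt (Dp k) (Ep k x) x := by
  unfold Dp Ep
  exact HasDerivAt.fun_sum (fun j _ => hasDerivAt_pow j x)

lemma qf_hasDeriv (k : ℕ) (c x : ℝ) :
    HasDerivAt (qf k c) (2 * (k:ℝ) * x ^ (k-1) - c * Ep k x) x := by
  have h1 : HasDerivAt (fun x : ℝ => 2 * x ^ k + 1) (2 * (k:ℝ) * x ^ (k-1)) x := by
    have := (hasDerivAt_pow k x).const_mul (2:ℝ)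
    simpa [mul_assoc, mul_comm, mul_left_comm] using this.add_const 1
  have h2 := (Dp_hasDeriv k x).const_mul c
  exact h1.sub h2

lemma key_lt {k : ℕ} (hk : 2 ≤ k) {x y : ℝ} (hx : 0 < x) (hxy : x < y) :
    x ^ (k-1) * Ep k y < y ^ (k-1) * Ep k x := by
  unfold Ep
  rw [Finset.mul_sum, Finset.mul_sum]
  refine Finset.sum_lt_sum_of_nonempty (icc_nonempty hk) (fun j hj => ?_)
  obtain ⟨hj1, hj2⟩ := Finset.mem_Icc.mp hj
  have hd : k - 1 = (j - 1) + (k - j) := by omega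
  have h1 : x ^ (k-j) < y ^ (k-j) := pow_lt_pow_left₀ hxy hx.le (by omega)
  have h2 : (0:ℝ) < (j:ℝ) * (x ^ (j-1) * y ^ (j-1)) := by
    have : (0:ℝ) < j := by exact_mod_cast hj1
    have hy : 0 < y := hx.trans hxy
    positivity
  calc x ^ (k-1) * ((j:ℝ) * y ^ (j-1))
      = ((j:ℝ) * (x ^ (j-1) * y ^ (j-1))) * x ^ (k-j) := by rw [hd, pow_add]; ring
    _ < ((j:ℝ) * (x ^ (j-1) * y ^ (j-1))) * y ^ (k-j) := by
        exact mul_lt_mul_of_pos_left h1 h2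
    _ = y ^ (k-1) * ((j:ℝ) * x ^ (j-1)) := by rw [hd, pow_add]; ring

end SOS3

namespace SOS3

lemma Ep_lower {k : ℕ} (hk : 2 ≤ k) {x : ℝ} (hx : 0 ≤ x) :
    ((k:ℝ)-1) * x^(k-2) ≤ Ep k x := by
  have hmem : k - 1 ∈ Finset.Icc 1 (k-1) := by simp [Finset.mem_Icc]; omega
  have h := Finset.single_le_sum (f := fun j : ℕ => (j:ℝ) * x^(j-1))
    (fun i _ => by positivity) hmem
  have hc : ((k-1:ℕ):ℝ) = (k:ℝ) - 1 := by
    push_cast [Nat.cast_sub (by omega : 1 ≤ k)]; ring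
  have he : k - 1 - 1 = k - 2 := by omega
  unfold Ep
  calc ((k:ℝ)-1) * x^(k-2) = ((k-1:ℕ):ℝ) * x^(k-1-1) := by rw [hc, he]
    _ ≤ _ := h

lemma Ep_upper {k : ℕ} (hk : 2 ≤ k) {x : ℝ} (hx : 1 ≤ x) :
    Ep k x ≤ Ep k 1 * x^(k-2) := by
  have h1 : Ep k 1 = ∑ j ∈ Finset.Icc 1 (k-1), (j:ℝ) := by
    unfold Ep; simp
  rw [h1, Finset.sum_mul]
  refine Finset.sum_le_sum (fun j hj => ?_)
  obtain ⟨hj1, hj2⟩ := Finset.mem_Icc.mp hj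
  have : x^(j-1) ≤ x^(k-2) := pow_le_pow_right₀ hx (by omega)
  have hjpos : (0:ℝ) ≤ (j:ℝ) := by positivity
  exact mul_le_mul_of_nonneg_left this hjpos

lemma Dp_le_of_le_one {k : ℕ} (hk : 2 ≤ k) {x : ℝ} (h0 : 0 ≤ x) (h1 : x ≤ 1) :
    Dp k x ≤ ((k:ℝ)-1) * x := by
  have : Dp k x ≤ (Finset.Icc 1 (k-1)).card • x := by
    refine Finset.sum_le_card_nsmul _ _ x (fun j hj => ?_)
    obtain ⟨hj1, hj2⟩ := Finset.mem_Icc.mp hj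
    calc x ^ j ≤ x ^ 1 := pow_le_pow_of_le_one h0 h1 hj1
      _ = x := pow_one x
  rw [Nat.card_Icc] at this
  have hcard : ((k - 1 + 1 - 1 : ℕ) : ℝ) = (k:ℝ) - 1 := by
    rw [show k - 1 + 1 - 1 = k - 1 from by omega]
    push_cast [Nat.cast_sub (by omega : 1 ≤ k)]; ring
  calc Dp k x ≤ ((k - 1 + 1 - 1 : ℕ) : ℝ) * x := by rw [← nsmul_eq_mul]; exact this
    _ = ((k:ℝ)-1) * x := by rw [hcard]

lemma Dp_le_of_one_le {k : ℕ} (hk : 2 ≤ k) {x : ℝ} (h1 : 1 ≤ x) :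
    Dp k x ≤ ((k:ℝ)-1) * x^(k-1) := by
  have : Dp k x ≤ (Finset.Icc 1 (k-1)).card • x^(k-1) := by
    refine Finset.sum_le_card_nsmul _ _ _ (fun j hj => ?_)
    obtain ⟨hj1, hj2⟩ := Finset.mem_Icc.mp hj
    exact pow_le_pow_right₀ h1 hj2
  rw [Nat.card_Icc] at this
  have hcard : ((k - 1 + 1 - 1 : ℕ) : ℝ) = (k:ℝ) - 1 := by
    rw [show k - 1 + 1 - 1 = k - 1 from by omega]
    push_cast [Nat.cast_sub (by omega : 1 ≤ k)]; ring
  calc Dp k x ≤ ((k - 1 + 1 - 1 : ℕ) : ℝ) * x^(k-1) := by rw [← nsmul_eq_mul]; exact this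
    _ = ((k:ℝ)-1) * x^(k-1) := by rw [hcard]

lemma exists_x1 {k : ℕ} (hk : 2 ≤ k) {c : ℝ} (hc : 0 < c) :
    ∃ x₁ : ℝ, 0 < x₁ ∧ 2*(k:ℝ)*x₁^(k-1) = c * Ep k x₁ ∧
      (∀ x, 0 < x → x < x₁ → 2*(k:ℝ)*x^(k-1) < c * Ep k x) ∧
      (∀ x, x₁ < x → c * Ep k x < 2*(k:ℝ)*x^(k-1)) := by
  have hkR : (0:ℝ) < (k:ℝ) := by positivity
  have hk1 : (0:ℝ) < (k:ℝ) - 1 := by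
    have : (2:ℝ) ≤ (k:ℝ) := by exact_mod_cast hk
    linarith
  set w : ℝ → ℝ := fun x => 2*(k:ℝ)*x^(k-1) - c * Ep k x with hw
  have hwc : Continuous w := by
    exact (continuous_const.mul (continuous_pow _)).sub (continuous_const.mul (Ep_cont k))
  set a : ℝ := c*((k:ℝ)-1)/(4*(k:ℝ)) with ha
  set b : ℝ := max 1 (c*((k:ℝ)-1)) with hb
  have hapos : 0 < a := by positivity
  have hab : a ≤ b := by
    have h1 : a ≤ c*((k:ℝ)-1) := by
      rw [ha, div_le_iff₀ (by positivity)]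
      nlinarith [mul_pos hc hk1]
    exact h1.trans (le_max_right _ _)
  have hwa : w a < 0 := by
    have hEp := Ep_lower hk hapos.le
    have hsplit : a^(k-1) = a^(k-2) * a := by
      rw [show k - 1 = (k-2)+1 by omega, pow_succ]
    have hap : (0:ℝ) < a^(k-2) := by positivity
    simp only [hw]
    have h2 : 2*(k:ℝ)*a^(k-1) = c*((k:ℝ)-1)/2 * a^(k-2) := by
      rw [hsplit, ha]; field_simp; ring
    nlinarith [mul_le_mul_of_nonneg_left hEp hc.le, mul_pos hc hap]
  have hb1 : (1:ℝ) ≤ b := le_max_left _ _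
  have hwb : 0 < w b := by
    have hEp := Ep_upper hk hb1
    have hE1 := Ep_one hk
    have hsplit : b^(k-1) = b^(k-2) * b := by
      rw [show k - 1 = (k-2)+1 by omega, pow_succ]
    have hbp : (0:ℝ) < b^(k-2) := by positivity
    have hbge : c*((k:ℝ)-1) ≤ b := le_max_right _ _
    simp only [hw]
    have h3 : c * Ep k b ≤ c * (Ep k 1 * b^(k-2)) := mul_le_mul_of_nonneg_left hEp hc.le
    have h8 : c * (Ep k 1 * b^(k-2)) = c*(k:ℝ)*((k:ℝ)-1)*b^(k-2)/2 := by
      linear_combination (c*b^(k-2)/2) * hE1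
    have h6 : 2*(k:ℝ)*b^(k-1) = 2*(k:ℝ)*b^(k-2)*b := by rw [hsplit]; ring
    have h7 : 2*(k:ℝ)*b^(k-2)*(c*((k:ℝ)-1)) ≤ 2*(k:ℝ)*b^(k-2)*b :=
      mul_le_mul_of_nonneg_left hbge (by positivity)
    have h9 : c*(k:ℝ)*((k:ℝ)-1)*b^(k-2)/2 < 2*(k:ℝ)*b^(k-2)*(c*((k:ℝ)-1)) := by
      nlinarith [mul_pos (mul_pos (mul_pos hc hkR) hk1) hbp]
    linarith [h3.trans_eq h8]
  obtain ⟨x₁, hx₁mem, hx₁⟩ : ∃ x₁ ∈ Set.Icc a b, w x₁ = 0 := by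
    have := intermediate_value_Icc hab hwc.continuousOn
    have h0 : (0:ℝ) ∈ Set.Icc (w a) (w b) := ⟨hwa.le, hwb.le⟩
    obtain ⟨x₁, hx₁, hwx₁⟩ := this h0
    exact ⟨x₁, hx₁, hwx₁⟩
  have hx₁pos : 0 < x₁ := lt_of_lt_of_le hapos hx₁mem.1
  have heq : 2*(k:ℝ)*x₁^(k-1) = c * Ep k x₁ := by
    have : w x₁ = 2*(k:ℝ)*x₁^(k-1) - c * Ep k x₁ := rfl
    linarith [hx₁, this.symm.trans hx₁]
  refine ⟨x₁, hx₁pos, heq, fun x hx hlt => ?_, fun x hlt => ?_⟩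
  · have hkey := key_lt hk hx hlt
    have hE1 : 0 < Ep k x₁ := Ep_pos hk hx₁pos
    have hEx : 0 < Ep k x := Ep_pos hk hx
    have h7 : (2*(k:ℝ)*x^(k-1)) * Ep k x₁ < (c * Ep k x) * Ep k x₁ := by
      nlinarith [hkey]
    exact lt_of_mul_lt_mul_right h7 hE1.le
  · have hxpos : 0 < x := hx₁pos.trans hlt
    have hkey := key_lt hk hx₁pos hlt
    have hE1 : 0 < Ep k x₁ := Ep_pos hk hx₁pos
    have hEx : 0 < Ep k x := Ep_pos hk hxpos
    have h7 : (c * Ep k x) * Ep k x₁ < (2*(k:ℝ)*x^(k-1)) * Ep k x₁ := by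
      nlinarith [hkey]
    exact lt_of_mul_lt_mul_right h7 hE1.le

end SOS3

namespace SOS3

noncomputable def gf (k : ℕ) (x : ℝ) : ℝ := (2*x^k + 1) / Dp k x

lemma qg {k : ℕ} (hk : 2 ≤ k) (c : ℝ) {x : ℝ} (hx : 0 < x) :
    qf k c x = Dp k x * (gf k x - c) := by
  have hD := (Dp_pos hk hx).ne'
  unfold qf gf
  field_simp

lemma gf_one {k : ℕ} (hk : 2 ≤ k) : gf k 1 = 3 / ((k:ℝ) - 1) := by
  unfold gf; rw [Dp_one hk]; norm_num

/-- Structure: strict anti then strict mono around x₁. -/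
lemma qf_shape {k : ℕ} (hk : 2 ≤ k) {c : ℝ} (hc : 0 < c) :
    ∃ x₁ : ℝ, 0 < x₁ ∧
      StrictAntiOn (qf k c) (Set.Icc 0 x₁) ∧ StrictMonoOn (qf k c) (Set.Ici x₁) ∧
      ((k:ℝ) * 2 * x₁^(k-1) = c * Ep k x₁) ∧
      (∀ x, 0 < x → x < x₁ → 2*(k:ℝ)*x^(k-1) < c * Ep k x) := by
  obtain ⟨x₁, hx₁pos, heq, hneg, hpos⟩ := exists_x1 hk hc
  have hdiff : ∀ x : ℝ, DifferentiableAt ℝ (qf k c) x :=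
    fun x => (qf_hasDeriv k c x).differentiableAt
  refine ⟨x₁, hx₁pos, ?_, ?_, by linarith [heq], hneg⟩
  · refine strictAntiOn_of_deriv_neg (convex_Icc 0 x₁) (qf_cont k c).continuousOn ?_
    intro x hx
    rw [interior_Icc] at hx
    rw [(qf_hasDeriv k c x).deriv]
    have := hneg x hx.1 hx.2
    linarith
  · refine strictMonoOn_of_deriv_pos (convex_Ici x₁) (qf_cont k c).continuousOn ?_
    intro x hx
    rw [interior_Ici] at hx
    rw [(qf_hasDeriv k c x).deriv]
    have := hpos x hx
    linarith

lemma qf_pos_large {k : ℕ} (hk : 2 ≤ k) {c : ℝ} (hc : 0 < c) {x : ℝ}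
    (hx1 : 1 ≤ x) (hx2 : c * ((k:ℝ)-1) ≤ 2*x) : 0 < qf k c x := by
  have hxpos : (0:ℝ) < x := lt_of_lt_of_le one_pos hx1
  have hD := Dp_le_of_one_le hk hx1
  have hxk : x^k = x * x^(k-1) := by
    conv_lhs => rw [show k = (k-1)+1 from by omega]
    rw [pow_succ]; ring
  have hp : (0:ℝ) < x^(k-1) := by positivity
  unfold qf
  have h1 : c * Dp k x ≤ c * (((k:ℝ)-1) * x^(k-1)) := mul_le_mul_of_nonneg_left hD hc.le
  nlinarith [mul_le_mul_of_nonneg_right hx2 hp.le]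
end SOS3

namespace SOS3

def Zroots (k : ℕ) (c : ℝ) : Set ℝ := {x : ℝ | 0 < x ∧ qf k c x = 0}

lemma qf_min {k : ℕ} {c x₁ : ℝ} (hx₁ : 0 < x₁)
    (hanti : StrictAntiOn (qf k c) (Set.Icc 0 x₁)) (hmono : StrictMonoOn (qf k c) (Set.Ici x₁))
    {x : ℝ} (hx : 0 < x) : qf k c x₁ ≤ qf k c x := by
  rcases le_or_gt x x₁ with h | h
  · rcases h.lt_or_eq with h' | h'
    · exact (hanti ⟨hx.le, h⟩ ⟨hx₁.le, le_rfl⟩ h').le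
    · rw [h']
  · exact (hmono Set.self_mem_Ici (Set.mem_Ici.mpr h.le) h).le

lemma Z_empty {k : ℕ} {c x₁ : ℝ} (hx₁ : 0 < x₁)
    (hanti : StrictAntiOn (qf k c) (Set.Icc 0 x₁)) (hmono : StrictMonoOn (qf k c) (Set.Ici x₁))
    (hq : 0 < qf k c x₁) : Zroots k c = ∅ := by
  ext x
  simp only [Zroots, Set.mem_setOf_eq, Set.mem_empty_iff_false, iff_false, not_and]
  intro hx hq0
  have := qf_min hx₁ hanti hmono hx
  linarith

lemma Z_single {k : ℕ} {c x₁ : ℝ} (hx₁ : 0 < x₁)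
    (hanti : StrictAntiOn (qf k c) (Set.Icc 0 x₁)) (hmono : StrictMonoOn (qf k c) (Set.Ici x₁))
    (hq : qf k c x₁ = 0) : Zroots k c = {x₁} := by
  ext x
  simp only [Zroots, Set.mem_setOf_eq, Set.mem_singleton_iff]
  constructor
  · rintro ⟨hx, hq0⟩
    by_contra hne
    rcases lt_or_gt_of_ne hne with h | h
    · have := hanti ⟨hx.le, h.le⟩ ⟨hx₁.le, le_rfl⟩ h
      linarith
    · have := hmono Set.self_mem_Ici (Set.mem_Ici.mpr h.le) h
      linarith
  · rintro rfl; exact ⟨hx₁, hq⟩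

lemma Z_pair {k : ℕ} (hk : 2 ≤ k) {c x₁ : ℝ} (hc : 0 < c) (hx₁ : 0 < x₁)
    (hanti : StrictAntiOn (qf k c) (Set.Icc 0 x₁)) (hmono : StrictMonoOn (qf k c) (Set.Ici x₁))
    (hq : qf k c x₁ < 0) :
    ∃ r₁ r₂ : ℝ, 0 < r₁ ∧ r₁ < x₁ ∧ x₁ < r₂ ∧ Zroots k c = {r₁, r₂} := by
  have hcont := (qf_cont k c).continuousOn (s := Set.Icc 0 x₁)
  have hq0 : qf k c 0 = 1 := qf_zero hk c
  obtain ⟨r₁, hr₁mem, hr₁⟩ : ∃ r₁ ∈ Set.Icc (0:ℝ) x₁, qf k c r₁ = 0 := by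
    have h := intermediate_value_Icc' hx₁.le hcont
    have h0 : (0:ℝ) ∈ Set.Icc (qf k c x₁) (qf k c 0) := ⟨hq.le, by rw [hq0]; norm_num⟩
    obtain ⟨r₁, hr₁, hv⟩ := h h0
    exact ⟨r₁, hr₁, hv⟩
  set B : ℝ := max (max 1 (c*((k:ℝ)-1))) x₁ with hB
  have hB1 : (1:ℝ) ≤ B := le_trans (le_max_left _ _) (le_max_left _ _)
  have hBc : c*((k:ℝ)-1) ≤ 2*B := by
    have h1 : c*((k:ℝ)-1) ≤ B := le_trans (le_max_right _ _) (le_max_left _ _)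
    linarith
  have hBx : x₁ ≤ B := le_max_right _ _
  have hqB : 0 < qf k c B := qf_pos_large hk hc hB1 hBc
  obtain ⟨r₂, hr₂mem, hr₂⟩ : ∃ r₂ ∈ Set.Icc x₁ B, qf k c r₂ = 0 := by
    have h := intermediate_value_Icc hBx ((qf_cont k c).continuousOn)
    have h0 : (0:ℝ) ∈ Set.Icc (qf k c x₁) (qf k c B) := ⟨hq.le, hqB.le⟩
    obtain ⟨r₂, hr₂, hv⟩ := h h0
    exact ⟨r₂, hr₂, hv⟩
  have hr₁pos : 0 < r₁ := by
    rcases eq_or_lt_of_le hr₁mem.1 with h | h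
    · exfalso; rw [← h] at hr₁
      exact absurd (hq0.symm.trans hr₁) (by norm_num)
    · exact h
  have hr₁lt : r₁ < x₁ := by
    rcases eq_or_lt_of_le hr₁mem.2 with h | h
    · exfalso; rw [h] at hr₁; linarith
    · exact h
  have hr₂gt : x₁ < r₂ := by
    rcases eq_or_lt_of_le hr₂mem.1 with h | h
    · exfalso; rw [← h] at hr₂; linarith
    · exact h
  refine ⟨r₁, r₂, hr₁pos, hr₁lt, hr₂gt, ?_⟩
  ext x
  simp only [Zroots, Set.mem_setOf_eq, Set.mem_insert_iff, Set.mem_singleton_iff]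
  constructor
  · rintro ⟨hx, hqx⟩
    rcases le_or_gt x x₁ with h | h
    · left
      exact hanti.injOn ⟨hx.le, h⟩ ⟨hr₁pos.le, hr₁lt.le⟩ (by rw [hqx, hr₁])
    · right
      exact hmono.injOn (Set.mem_Ici.mpr h.le) (Set.mem_Ici.mpr hr₂gt.le) (by rw [hqx, hr₂])
  · rintro (rfl | rfl)
    · exact ⟨hr₁pos, hr₁⟩
    · exact ⟨hx₁.trans hr₂gt, hr₂⟩

end SOS3

namespace SOS3

lemma gf_lb_small {k : ℕ} (hk : 2 ≤ k) {x : ℝ} (hx : 0 < x) (hx1 : x ≤ 1) :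
    1/(((k:ℝ)-1)*x) ≤ gf k x := by
  have hk1 : (0:ℝ) < (k:ℝ) - 1 := by
    have : (2:ℝ) ≤ (k:ℝ) := by exact_mod_cast hk
    linarith
  have hD := Dp_pos hk hx
  have hDle := Dp_le_of_le_one hk hx.le hx1
  calc 1/(((k:ℝ)-1)*x) ≤ 1/Dp k x := one_div_le_one_div_of_le hD hDle
    _ ≤ (2*x^k+1)/Dp k x := by
        apply div_le_div_of_nonneg_right ?_ hD.le
        nlinarith [pow_pos hx k]
    _ = gf k x := rfl

lemma gf_lb_large {k : ℕ} (hk : 2 ≤ k) {x : ℝ} (hx1 : 1 ≤ x) :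
    2*x/((k:ℝ)-1) ≤ gf k x := by
  have hk1 : (0:ℝ) < (k:ℝ) - 1 := by
    have : (2:ℝ) ≤ (k:ℝ) := by exact_mod_cast hk
    linarith
  have hx : (0:ℝ) < x := lt_of_lt_of_le one_pos hx1
  have hD := Dp_pos hk hx
  have hDle := Dp_le_of_one_le hk hx1
  have hxk : x^k = x * x^(k-1) := by
    conv_lhs => rw [show k = (k-1)+1 from by omega]
    rw [pow_succ]; ring
  have hxp : (0:ℝ) < x^(k-1) := by positivity
  calc 2*x/((k:ℝ)-1) = 2*x^k/(((k:ℝ)-1)*x^(k-1)) := by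
        rw [hxk]; field_simp
    _ ≤ 2*x^k/Dp k x := by gcongr
    _ ≤ (2*x^k+1)/Dp k x := by gcongr; linarith
    _ = gf k x := rfl

lemma gf_min_exists {k : ℕ} (hk : 2 ≤ k) :
    ∃ xs : ℝ, 0 < xs ∧ ∀ y : ℝ, 0 < y → gf k xs ≤ gf k y := by
  have hk1 : (0:ℝ) < (k:ℝ) - 1 := by
    have : (2:ℝ) ≤ (k:ℝ) := by exact_mod_cast hk
    linarith
  set L : ℝ := gf k 1 with hLdef
  have hL : L = 3 / ((k:ℝ) - 1) := gf_one hk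
  have hLpos : 0 < L := by rw [hL]; positivity
  set a : ℝ := 1/(((k:ℝ)-1)*(L+1)) with hadef
  set b : ℝ := max 1 (((k:ℝ)-1)*(L+1)) with hbdef
  have hk2 : (1:ℝ) ≤ (k:ℝ) - 1 := by
    have : (2:ℝ) ≤ (k:ℝ) := by exact_mod_cast hk
    linarith
  have hprod : (1:ℝ) ≤ ((k:ℝ)-1)*(L+1) := by nlinarith
  have ha0 : 0 < a := by positivity
  have ha1 : a ≤ 1 := by
    rw [hadef]
    rw [div_le_one (by positivity)]
    exact hprod
  have hb1 : (1:ℝ) ≤ b := le_max_left _ _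
  have hab : a ≤ b := ha1.trans hb1
  have hcont : ContinuousOn (gf k) (Set.Icc a b) := by
    apply ContinuousOn.div
    · exact ((continuous_const.mul (continuous_pow k)).add continuous_const).continuousOn
    · exact (Dp_cont k).continuousOn
    · intro x hx
      exact (Dp_pos hk (lt_of_lt_of_le ha0 hx.1)).ne'
  obtain ⟨xs, hxsmem, hmin⟩ := isCompact_Icc.exists_isMinOn (Set.nonempty_Icc.mpr hab) hcont
  have hxs0 : 0 < xs := lt_of_lt_of_le ha0 hxsmem.1
  have h1mem : (1:ℝ) ∈ Set.Icc a b := ⟨ha1, hb1⟩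
  have hxsL : gf k xs ≤ L := hmin h1mem
  refine ⟨xs, hxs0, fun y hy => ?_⟩
  rcases le_or_gt y b with hyb | hyb
  · rcases le_or_gt a y with hay | hay
    · exact hmin ⟨hay, hyb⟩
    · -- y < a ≤ 1
      have hy1 : y ≤ 1 := hay.le.trans ha1
      have h1 := gf_lb_small hk hy hy1
      have h2 : 1/(((k:ℝ)-1)*a) ≤ 1/(((k:ℝ)-1)*y) := by
        apply one_div_le_one_div_of_le (by positivity)
        nlinarith
      have h3 : 1/(((k:ℝ)-1)*a) = L + 1 := by
        rw [hadef]
        field_simp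
      linarith
  · -- b < y
    have hy1 : 1 ≤ y := hb1.trans hyb.le
    have h1 := gf_lb_large hk hy1
    have hbge : ((k:ℝ)-1)*(L+1) ≤ b := le_max_right _ _
    have h2 : L + 1 ≤ 2*y/((k:ℝ)-1) := by
      rw [le_div_iff₀ hk1]
      nlinarith
    linarith

end SOS3

open SOS3 in
/-- For each `k ≥ 2` there is exactly one critical value `τ_c` with
`2 < τ_c < τ₀ = (2k+1)/(k−1)` such that the equation
`2x^(k+1) − τx^k + (τ−1)x − 1 = 0` in `x > 0` has:
a unique positive solution if `τ < τ_c`; exactly two if `τ = τ_c`;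
exactly three if `τ > τ_c` and `τ ≠ τ₀`; exactly two if `τ = τ₀`.
In each case `x = 1` is a solution. -/
theorem sos_three_periodic_critical_value
    (k : ℕ) (hk : 2 ≤ k) :
    ∃! τc : ℝ, 2 < τc ∧ τc < (2 * (k : ℝ) + 1) / ((k : ℝ) - 1) ∧
      (∀ τ : ℝ, 2 < τ → τ < τc →
        {x : ℝ | 0 < x ∧ 2 * x ^ (k + 1) - τ * x ^ k + (τ - 1) * x - 1 = 0}.ncard
          = 1) ∧
      ({x : ℝ | 0 < x ∧ 2 * x ^ (k + 1) - τc * x ^ k + (τc - 1) * x - 1 = 0}.ncard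
          = 2) ∧
      (∀ τ : ℝ, 2 < τ → τc < τ → τ ≠ (2 * (k : ℝ) + 1) / ((k : ℝ) - 1) →
        {x : ℝ | 0 < x ∧ 2 * x ^ (k + 1) - τ * x ^ k + (τ - 1) * x - 1 = 0}.ncard
          = 3) ∧
      ({x : ℝ | 0 < x ∧
          2 * x ^ (k + 1) - ((2 * (k : ℝ) + 1) / ((k : ℝ) - 1)) * x ^ k +
            ((2 * (k : ℝ) + 1) / ((k : ℝ) - 1) - 1) * x - 1 = 0}.ncard = 2) ∧
      (∀ τ : ℝ, 2 < τ →
        (1 : ℝ) ∈ {x : ℝ | 0 < x ∧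
          2 * x ^ (k + 1) - τ * x ^ k + (τ - 1) * x - 1 = 0}) := by
  have hkR : (2:ℝ) ≤ (k:ℝ) := by exact_mod_cast hk
  have hk1 : (0:ℝ) < (k:ℝ) - 1 := by linarith
  set t0 : ℝ := (2*(k:ℝ)+1)/((k:ℝ)-1) with ht0def
  set L : ℝ := 3/((k:ℝ)-1) with hLdef
  have hLpos : 0 < L := by positivity
  have ht0L : t0 = L + 2 := by rw [ht0def, hLdef]; field_simp; ring
  have hgf1 : gf k 1 = L := gf_one hk
  obtain ⟨xs, hxs0, hmin⟩ := gf_min_exists hk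
  set cs : ℝ := gf k xs with hcs
  have hcspos : 0 < cs := by
    rw [hcs]; unfold gf
    apply div_pos (by nlinarith [pow_pos hxs0 k]) (Dp_pos hk hxs0)
  -- cs < L
  have hcsL : cs < L := by
    obtain ⟨x₁, hx₁0, hanti, hmono, heq, hneg⟩ := qf_shape hk hLpos
    have hE1 := Ep_one hk
    have hEval : Ep k 1 = (k:ℝ)*((k:ℝ)-1)/2 := by linarith
    have hkey : L * Ep k 1 = 3*(k:ℝ)/2 := by
      rw [hEval, hLdef]; field_simp
    have hx₁1 : x₁ < 1 := by
      by_contra hge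
      push_neg at hge
      rcases hge.lt_or_eq with h | h
      · have h2 := hneg 1 one_pos h
        rw [one_pow] at h2
        nlinarith
      · rw [← h] at heq
        rw [one_pow] at heq
        nlinarith
    have hq1 : qf k L 1 = 0 := by
      rw [qf_one hk, hLdef]; field_simp; ring
    have hql : qf k L x₁ < 0 := by
      have := hmono Set.self_mem_Ici (Set.mem_Ici.mpr hx₁1.le) hx₁1
      rw [hq1] at this
      exact this
    have hqg := qg hk L hx₁0
    have hD := Dp_pos hk hx₁0
    have hgx₁ : gf k x₁ < L := by
      by_contra hge
      push_neg at hge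
      have : 0 ≤ Dp k x₁ * (gf k x₁ - L) := mul_nonneg hD.le (by linarith)
      linarith
    exact lt_of_le_of_lt (hmin x₁ hx₁0) hgx₁
  -- set description
  have hSdesc : ∀ τ : ℝ, {x : ℝ | 0 < x ∧ 2*x^(k+1) - τ*x^k + (τ-1)*x - 1 = 0}
      = insert 1 (Zroots k (τ-2)) := by
    intro τ
    ext x
    have hfac : 2*x^(k+1) - τ*x^k + (τ-1)*x - 1 = (x-1) * qf k (τ-2) x := by
      linear_combination factor hk (τ-2) x
    simp only [Set.mem_setOf_eq, Set.mem_insert_iff, Zroots, hfac]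
    constructor
    · rintro ⟨hx, hq⟩
      rcases mul_eq_zero.mp hq with h | h
      · left; linarith
      · right; exact ⟨hx, h⟩
    · rintro (rfl | ⟨hx, h⟩)
      · exact ⟨one_pos, by ring⟩
      · exact ⟨hx, by rw [h]; ring⟩
  -- property (i)
  have hprop1 : ∀ τ : ℝ, 2 < τ → τ < cs + 2 →
      {x : ℝ | 0 < x ∧ 2*x^(k+1) - τ*x^k + (τ-1)*x - 1 = 0}.ncard = 1 := by
    intro τ h2 hlt
    rw [hSdesc τ]
    have hZ : Zroots k (τ-2) = ∅ := by
      ext x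
      simp only [Zroots, Set.mem_setOf_eq, Set.mem_empty_iff_false, iff_false, not_and]
      intro hx hq
      have hqg := qg hk (τ-2) hx
      have hD := Dp_pos hk hx
      have hgx := hmin x hx
      nlinarith [mul_pos hD (show (0:ℝ) < gf k x - (τ-2) by linarith)]
    rw [hZ]
    simp
  -- property (iii)
  have hprop3 : ∀ τ : ℝ, 2 < τ → cs + 2 < τ → τ ≠ t0 →
      {x : ℝ | 0 < x ∧ 2*x^(k+1) - τ*x^k + (τ-1)*x - 1 = 0}.ncard = 3 := by
    intro τ h2 hgt hne
    rw [hSdesc τ]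
    have hcpos : (0:ℝ) < τ - 2 := by linarith
    obtain ⟨x₁, hx₁0, hanti, hmono, heq, hneg⟩ := qf_shape hk hcpos
    have hqxs : qf k (τ-2) xs < 0 := by
      have hqg := qg hk (τ-2) hxs0
      have hD := Dp_pos hk hxs0
      have : Dp k xs * (gf k xs - (τ-2)) < 0 :=
        mul_neg_of_pos_of_neg hD (by rw [← hcs]; linarith)
      linarith
    have hq₁ : qf k (τ-2) x₁ < 0 := lt_of_le_of_lt (qf_min hx₁0 hanti hmono hxs0) hqxs
    obtain ⟨r₁, r₂, hr₁0, hr₁lt, hr₂gt, hZ⟩ := Z_pair hk hcpos hx₁0 hanti hmono hq₁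
    rw [hZ]
    have h1q : qf k (τ-2) 1 ≠ 0 := by
      rw [qf_one hk]
      intro h
      have h3 : (τ-2)*((k:ℝ)-1) = 3 := by linarith
      apply hne
      rw [ht0def]
      field_simp
      linear_combination h3
    have hmem₁ : r₁ ∈ Zroots k (τ-2) := by rw [hZ]; exact Set.mem_insert _ _
    have hmem₂ : r₂ ∈ Zroots k (τ-2) := by rw [hZ]; exact Set.mem_insert_of_mem _ rfl
    have h1r₁ : (1:ℝ) ≠ r₁ := fun h => h1q (by rw [h]; exact hmem₁.2)
    have h1r₂ : (1:ℝ) ≠ r₂ := fun h => h1q (by rw [h]; exact hmem₂.2)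
    have hrne : r₁ ≠ r₂ := ne_of_lt (hr₁lt.trans hr₂gt)
    rw [Set.ncard_insert_of_notMem (by
      simp only [Set.mem_insert_iff, Set.mem_singleton_iff]
      push_neg
      exact ⟨h1r₁, h1r₂⟩) (Set.toFinite _)]
    rw [Set.ncard_pair hrne]
  refine ⟨cs + 2, ⟨by linarith, by rw [ht0L]; linarith, hprop1, ?_, hprop3, ?_, ?_⟩, ?_⟩
  · -- τ = τc : exactly two
    rw [hSdesc (cs+2)]
    rw [show cs + 2 - 2 = cs from by ring]
    obtain ⟨x₁, hx₁0, hanti, hmono, heq, hneg⟩ := qf_shape hk hcspos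
    have hqxs : qf k cs xs = 0 := by
      rw [qg hk cs hxs0, hcs]; ring
    have hq₁le : qf k cs x₁ ≤ 0 := (qf_min hx₁0 hanti hmono hxs0).trans_eq hqxs
    have hq₁ge : 0 ≤ qf k cs x₁ := by
      have hqg := qg hk cs hx₁0
      have hD := Dp_pos hk hx₁0
      have hgx := hmin x₁ hx₁0
      nlinarith [mul_nonneg hD.le (show (0:ℝ) ≤ gf k x₁ - cs by linarith)]
    have hq₁ : qf k cs x₁ = 0 := le_antisymm hq₁le hq₁ge
    rw [Z_single hx₁0 hanti hmono hq₁]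
    have hx₁ne : (1:ℝ) ≠ x₁ := by
      intro h
      have hqg := qg hk cs hx₁0
      rw [← h] at hqg hq₁
      rw [hgf1] at hqg
      have hD := Dp_pos hk one_pos
      nlinarith
    exact Set.ncard_pair hx₁ne
  · -- τ = τ₀ : exactly two
    rw [hSdesc t0]
    rw [show t0 - 2 = L from by rw [ht0L]; ring]
    obtain ⟨x₁, hx₁0, hanti, hmono, heq, hneg⟩ := qf_shape hk hLpos
    have hqxs : qf k L xs < 0 := by
      have hqg := qg hk L hxs0
      have hD := Dp_pos hk hxs0
      have : Dp k xs * (gf k xs - L) < 0 :=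
        mul_neg_of_pos_of_neg hD (by rw [← hcs]; linarith)
      linarith
    have hq₁ : qf k L x₁ < 0 := lt_of_le_of_lt (qf_min hx₁0 hanti hmono hxs0) hqxs
    obtain ⟨r₁, r₂, hr₁0, hr₁lt, hr₂gt, hZ⟩ := Z_pair hk hLpos hx₁0 hanti hmono hq₁
    rw [hZ]
    have h1mem : (1:ℝ) ∈ ({r₁, r₂} : Set ℝ) := by
      rw [← hZ]
      refine ⟨one_pos, ?_⟩
      rw [qf_one hk, hLdef]
      field_simp
      ring
    rw [Set.insert_eq_self.mpr h1mem]
    exact Set.ncard_pair (ne_of_lt (hr₁lt.trans hr₂gt))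
  · -- 1 is always a solution
    intro τ h2
    exact ⟨one_pos, by ring⟩
  · -- uniqueness
    rintro y ⟨hy2, hyt0, _, hy2card, _, _, _⟩
    by_contra hne
    rcases lt_or_gt_of_ne hne with h | h
    · have := hprop1 y hy2 h
      rw [hy2card] at this
      norm_num at this
    · have := hprop3 y hy2 h (ne_of_lt hyt0)
      rw [hy2card] at this
      norm_num at this
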